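/- The generating function for Schröder numbers: if s_k denotes the number of lattice paths from (0,0) to (2k,0) with steps (1,1), (1,−1), (2,0) staying weakly above the x-axis, then s_0 = 1, s_1 = 2, s_2 = 6, s_3 = 22, s_4 = 90, and the s_k satisfy the recurrence s_{k+1} = s_k + ∑_{i=0}^{k} s_i·s_{k−i} (equivalently (k+2)s_{k+1} = 3(2k+1)s_k − (k−1)s_{k−1}). -/

import Mathlib

def schroderDx : Fin 3 → ℕ := ![1, 1, 2]
def schroderDy : Fin 3 → ℤ := ![1, -1, 0]

def IsSchroderPath (k : ℕ) (l : List (Fin 3)) : Prop :=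
  (l.map schroderDx).sum = 2 * k ∧ (l.map schroderDy).sum = 0 ∧
    ∀ m : ℕ, 0 ≤ ((l.take m).map schroderDy).sum

noncomputable def schroderNum (k : ℕ) : ℕ :=
  Nat.card {l : List (Fin 3) // IsSchroderPath k l}

namespace SchroderAux

abbrev wt (l : List (Fin 3)) : ℤ := (l.map schroderDy).sum
abbrev xs (l : List (Fin 3)) : ℕ := (l.map schroderDx).sum

@[simp] lemma dx0 : schroderDx 0 = 1 := rfl
@[simp] lemma dx1 : schroderDx 1 = 1 := rfl
@[simp] lemma dx2 : schroderDx 2 = 2 := rfl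
@[simp] lemma dy0 : schroderDy 0 = 1 := rfl
@[simp] lemma dy1 : schroderDy 1 = -1 := rfl
@[simp] lemma dy2 : schroderDy 2 = 0 := rfl

lemma fin3 (a : Fin 3) : a = 0 ∨ a = 1 ∨ a = 2 := by revert a; decide

lemma dy_ge (a : Fin 3) : -1 ≤ schroderDy a := by revert a; decide

lemma length_le_xs : ∀ l : List (Fin 3), l.length ≤ xs l := by
  intro l; induction l with
  | nil => simp
  | cons a t ih =>
    have : 1 ≤ schroderDx a := by revert a; decide
    simp only [List.length_cons, xs, List.map_cons, List.sum_cons] at ih ⊢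
    omega

lemma even_sub : ∀ l : List (Fin 3), Even ((xs l : ℤ) - wt l) := by
  intro l; induction l with
  | nil => simp [wt, xs]
  | cons a t ih =>
    have ha : Even ((schroderDx a : ℤ) - schroderDy a) := by revert a; decide
    simp only [xs, wt, List.map_cons, List.sum_cons, Nat.cast_add] at *
    have := ha.add ih
    exact (congrArg Even (by ring : _ = _)).mpr this

lemma even_xs {l : List (Fin 3)} (h : wt l = 0) : ∃ i, xs l = 2 * i := by
  have := even_sub l
  rw [h, sub_zero] at this
  have : Even (xs l) := by exact_mod_cast this
  obtain ⟨i, hi⟩ := this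
  exact ⟨i, by omega⟩

lemma path_cons2 (k : ℕ) (t : List (Fin 3)) :
    IsSchroderPath (k + 1) (2 :: t) ↔ IsSchroderPath k t := by
  constructor
  · rintro ⟨h1, h2, h3⟩
    refine ⟨?_, ?_, ?_⟩
    · simp only [List.map_cons, List.sum_cons, dx2] at h1; omega
    · simpa using h2
    · intro m; have := h3 (m + 1); simpa using this
  · rintro ⟨h1, h2, h3⟩
    refine ⟨?_, ?_, ?_⟩
    · simp only [List.map_cons, List.sum_cons, dx2]; omega
    · simpa using h2
    · intro m
      cases m with
      | zero => simp
      | succ s => have := h3 s; simpa using this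

lemma glue (i j : ℕ) (A B : List (Fin 3)) (hA : IsSchroderPath i A) (hB : IsSchroderPath j B) :
    IsSchroderPath (i + j + 1) (0 :: (A ++ 1 :: B)) := by
  obtain ⟨hA1, hA2, hA3⟩ := hA
  obtain ⟨hB1, hB2, hB3⟩ := hB
  refine ⟨?_, ?_, ?_⟩
  · simp only [List.map_cons, List.map_append, List.sum_cons, List.sum_append, dx0, dx1]
    omega
  · simp only [List.map_cons, List.map_append, List.sum_cons, List.sum_append, dy0, dy1]
    omega
  · intro m
    cases m with
    | zero => simp
    | succ s =>
      rw [List.take_succ_cons, List.take_append]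
      by_cases hs : s ≤ A.length
      · have h0 : s - A.length = 0 := by omega
        rw [h0]
        have := hA3 s
        simp only [List.map_cons, List.map_append, List.sum_cons, List.sum_append,
          List.take_zero, List.map_nil, List.sum_nil, dy0]
        omega
      · obtain ⟨r, hr⟩ : ∃ r, s - A.length = r + 1 := ⟨s - A.length - 1, by omega⟩
        rw [hr, List.take_succ_cons, List.take_of_length_le (by omega)]
        have := hB3 r
        simp only [List.map_cons, List.map_append, List.sum_cons, List.sum_append, dy0, dy1]
        omega

lemma take_add' (t : List (Fin 3)) (m s : ℕ) (hm : m ≤ t.length) :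
    t.take (m + s) = t.take m ++ (t.drop m).take s := by
  conv_lhs => rw [← List.take_append_drop m t]
  rw [List.take_append, List.take_take, List.length_take,
    Nat.min_eq_left hm, Nat.min_eq_right (by omega), Nat.add_sub_cancel_left]

lemma decomp {k : ℕ} {l : List (Fin 3)} (h : IsSchroderPath (k + 1) l) :
    (∃ t, l = 2 :: t ∧ IsSchroderPath k t) ∨
      ∃ i A B, i ≤ k ∧ l = 0 :: (A ++ 1 :: B) ∧ IsSchroderPath i A ∧
        IsSchroderPath (k - i) B := by
  obtain ⟨h1, h2, h3⟩ := h
  cases l with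
  | nil => simp at h1
  | cons a t =>
    rcases fin3 a with rfl | rfl | rfl
    · -- northeast first step
      right
      have htwt : wt t = -1 := by
        simp only [wt, List.map_cons, List.sum_cons, dy0] at h2 ⊢; omega
      have hex : ∃ m, wt (t.take m) = -1 := ⟨t.length, by simpa using htwt⟩
      set m₀ := Nat.find hex with hm₀def
      have hm₀ : wt (t.take m₀) = -1 := Nat.find_spec hex
      have hmin : ∀ m < m₀, wt (t.take m) ≠ -1 := fun m hm => Nat.find_min hex hm
      have hge : ∀ m, -1 ≤ wt (t.take m) := by
        intro m
        have := h3 (m + 1)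
        simp only [List.take_succ_cons, List.map_cons, List.sum_cons, dy0] at this
        simp only [wt]
        omega
      have hge0 : ∀ m < m₀, 0 ≤ wt (t.take m) := by
        intro m hm; have h1 := hge m; have h2 := hmin m hm; omega
      have hm₀pos : 0 < m₀ := by
        rcases Nat.eq_zero_or_pos m₀ with h0 | h0
        · rw [h0] at hm₀; simp [wt] at hm₀
        · exact h0
      have hm₀le : m₀ ≤ t.length := Nat.find_le (by simpa using htwt)
      set e := t[m₀ - 1]'(by omega) with hedef
      have hsplit : t.take m₀ = t.take (m₀ - 1) ++ [e] := by
        have h' := List.take_succ (l := t) (i := m₀ - 1)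
        rw [List.getElem?_eq_getElem (by omega),
          show m₀ - 1 + 1 = m₀ from by omega] at h'
        rw [h']
        simp [hedef]
      have hkey : wt (t.take (m₀ - 1)) = 0 ∧ schroderDy e = -1 := by
        rw [hsplit] at hm₀
        have hd := dy_ge e
        have hg := hge0 (m₀ - 1) (by omega)
        simp only [wt, List.map_append, List.sum_append, List.map_cons, List.map_nil,
          List.sum_cons, List.sum_nil, add_zero] at hm₀ hg ⊢
        constructor <;> omega
      have he : e = 1 := by
        have h2' := hkey.2
        rcases fin3 e with h' | h' | h'
        · rw [h', dy0] at h2'; exact absurd h2' (by norm_num)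
        · exact h'
        · rw [h', dy2] at h2'; exact absurd h2' (by norm_num)
      set A := t.take (m₀ - 1) with hAdef
      set B := t.drop m₀ with hBdef
      have htAB : t = A ++ 1 :: B := by
        conv_lhs => rw [← List.take_append_drop m₀ t]
        rw [hsplit, he]
        simp [hBdef]
      -- A is a path
      have hApath : ∀ s, 0 ≤ wt (A.take s) := by
        intro s
        rw [hAdef, List.take_take]
        exact hge0 _ (by omega)
      obtain ⟨i, hi⟩ := even_xs hkey.1
      -- B facts
      simp only [xs] at hi
      have hBwt : wt B = 0 := by
        have h' := htwt
        conv_lhs at h' => rw [← List.take_append_drop m₀ t]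
        have hm := hm₀
        simp only [wt, List.map_append, List.sum_append] at h' hm ⊢
        rw [hBdef]
        omega
      have hBpre : ∀ s, 0 ≤ wt (B.take s) := by
        intro s
        have h' := hge (m₀ + s)
        rw [take_add' t m₀ s hm₀le] at h'
        have hm := hm₀
        simp only [wt, List.map_append, List.sum_append] at h' hm ⊢
        rw [hBdef]
        omega
      have hxs : (A.map schroderDx).sum + 1 + (B.map schroderDx).sum = 2 * k + 1 := by
        have h1' := h1
        rw [show (0 : Fin 3) :: t = 0 :: (A ++ 1 :: B) from by rw [← htAB]] at h1'
        simp only [List.map_cons, List.map_append, List.sum_cons, List.sum_append,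
          dx0, dx1] at h1'
        omega
      have hik : i ≤ k := by omega
      refine ⟨i, A, B, hik, by rw [htAB], ⟨hi, hkey.1, hApath⟩, ⟨?_, hBwt, hBpre⟩⟩
      omega
    · -- southeast first step: impossible
      exfalso
      have := h3 1
      simp at this
    · -- horizontal first step
      left
      exact ⟨t, rfl, (path_cons2 k t).1 ⟨h1, h2, h3⟩⟩

lemma cancel {i i' : ℕ} {A A' B B' : List (Fin 3)}
    (hA : IsSchroderPath i A) (hA' : IsSchroderPath i' A')
    (h : A ++ 1 :: B = A' ++ 1 :: B') : A = A' ∧ B = B' ∧ i = i' := by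
  have key : ∀ (j j' : ℕ) (X X' Y Y' : List (Fin 3)), IsSchroderPath j X →
      IsSchroderPath j' X' → X ++ 1 :: Y = X' ++ 1 :: Y' → ¬ X.length < X'.length := by
    intro j j' X X' Y Y' hX hX' hXY hlt
    have h1 : (X ++ 1 :: Y).take (X.length + 1) = X ++ [1] := by
      rw [List.take_append, List.take_of_length_le (by omega),
        Nat.add_sub_cancel_left]
      rfl
    have h2 : (X' ++ 1 :: Y').take (X.length + 1) = X'.take (X.length + 1) := by
      rw [List.take_append, show X.length + 1 - X'.length = 0 from by omega]
      simp
    rw [hXY, h2] at h1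
    have h3 := hX'.2.2 (X.length + 1)
    rw [h1] at h3
    simp only [List.map_append, List.sum_append, List.map_cons, List.map_nil,
      List.sum_cons, List.sum_nil, dy1] at h3
    have := hX.2.1
    omega
  have hlen : A.length = A'.length := by
    rcases Nat.lt_trichotomy A.length A'.length with h' | h' | h'
    · exact absurd h' (key i i' A A' B B' hA hA' h)
    · exact h'
    · exact absurd h' (key i' i A' A B' B hA' hA h.symm)
  obtain ⟨hAA, hBB⟩ := List.append_inj h hlen
  have hii : i = i' := by
    have := hA.1
    rw [hAA, hA'.1] at this
    omega
  exact ⟨hAA, by simpa using hBB, hii⟩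

instance instFin (k : ℕ) : Finite {l : List (Fin 3) // IsSchroderPath k l} := by
  have hsub : {l : List (Fin 3) | IsSchroderPath k l} ⊆ {l | l.length ≤ 2 * k} := by
    intro l hl
    have h' := length_le_xs l
    simp only [xs] at h'
    rw [hl.1] at h'
    exact h'
  exact ((List.finite_length_le (Fin 3) (2 * k)).subset hsub).to_subtype

lemma s0 : schroderNum 0 = 1 := by
  rw [schroderNum, Nat.card_eq_one_iff_unique]
  constructor
  · constructor
    intro a b
    have huniq : ∀ l, IsSchroderPath 0 l → l = [] := by
      intro l hl
      have h' := length_le_xs l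
      simp only [xs] at h'
      rw [hl.1] at h'
      exact List.length_eq_zero_iff.mp (by omega)
    exact Subtype.ext (by rw [huniq _ a.2, huniq _ b.2])
  · exact ⟨⟨[], by refine ⟨by simp, by simp, by simp⟩⟩⟩

lemma nat_card_sigma {n : ℕ} (f : Fin n → Type*) [∀ i, Finite (f i)] :
    Nat.card (Σ i, f i) = ∑ i, Nat.card (f i) := by
  letI : ∀ i, Fintype (f i) := fun i => Fintype.ofFinite _
  simp [Nat.card_eq_fintype_card]

lemma srec (k : ℕ) : schroderNum (k + 1) =
    schroderNum k + ∑ i ∈ Finset.range (k + 1), schroderNum i * schroderNum (k - i) := by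
  classical
  set T := ({l : List (Fin 3) // IsSchroderPath k l} ⊕
    (Σ i : Fin (k + 1), {l : List (Fin 3) // IsSchroderPath i l} ×
      {l : List (Fin 3) // IsSchroderPath (k - (i : ℕ)) l})) with hT
  let G : T → {l : List (Fin 3) // IsSchroderPath (k + 1) l} := fun x =>
    match x with
    | Sum.inl ⟨t, ht⟩ => ⟨2 :: t, (path_cons2 k t).2 ht⟩
    | Sum.inr ⟨i, ⟨A, hA⟩, ⟨B, hB⟩⟩ => ⟨0 :: (A ++ 1 :: B), by
        have := glue i (k - (i : ℕ)) A B hA hB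
        rwa [show (i : ℕ) + (k - (i : ℕ)) + 1 = k + 1 from by omega] at this⟩
  have hinj : Function.Injective G := by
    rintro (⟨t, ht⟩ | ⟨i, ⟨A, hA⟩, ⟨B, hB⟩⟩) (⟨t', ht'⟩ | ⟨i', ⟨A', hA'⟩, ⟨B', hB'⟩⟩) hxy <;>
      simp only [G, Subtype.mk.injEq, List.cons.injEq] at hxy
    · obtain ⟨-, rfl⟩ := hxy; rfl
    · exact absurd hxy.1 (by decide)
    · exact absurd hxy.1 (by decide)
    · obtain ⟨rfl, rfl, hii⟩ := cancel hA hA' hxy.2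
      have : i = i' := Fin.ext hii
      subst this
      rfl
  have hsurj : Function.Surjective G := by
    rintro ⟨l, hl⟩
    rcases decomp hl with ⟨t, rfl, ht⟩ | ⟨i, A, B, hik, rfl, hA, hB⟩
    · exact ⟨Sum.inl ⟨t, ht⟩, rfl⟩
    · exact ⟨Sum.inr ⟨⟨i, by omega⟩, ⟨A, hA⟩, ⟨B, hB⟩⟩, rfl⟩
  have hcard := Nat.card_eq_of_bijective G ⟨hinj, hsurj⟩
  rw [schroderNum, ← hcard, hT, Nat.card_sum, nat_card_sigma,
    ← Fin.sum_univ_eq_sum_range (fun i => schroderNum i * schroderNum (k - i)) (k + 1)]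
  refine congrArg₂ (· + ·) rfl ?_
  refine Finset.sum_congr rfl fun i _ => ?_
  rw [Nat.card_prod]
  rfl

end SchroderAux

theorem stmt13 :
    schroderNum 0 = 1 ∧ schroderNum 1 = 2 ∧ schroderNum 2 = 6 ∧
    schroderNum 3 = 22 ∧ schroderNum 4 = 90 ∧
    ∀ k : ℕ, schroderNum (k + 1) =
      schroderNum k + ∑ i ∈ Finset.range (k + 1), schroderNum i * schroderNum (k - i) := by
  have h0 := SchroderAux.s0
  have h1 : schroderNum 1 = 2 := by
    rw [SchroderAux.srec 0]; simp [Finset.sum_range_succ, h0]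
  have h2 : schroderNum 2 = 6 := by
    rw [SchroderAux.srec 1]; simp [Finset.sum_range_succ, h0, h1]
  have h3 : schroderNum 3 = 22 := by
    rw [SchroderAux.srec 2]; simp [Finset.sum_range_succ, h0, h1, h2]
  have h4 : schroderNum 4 = 90 := by
    rw [SchroderAux.srec 3]; simp [Finset.sum_range_succ, h0, h1, h2, h3]
  exact ⟨h0, h1, h2, h3, h4, SchroderAux.srec⟩
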